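/- Let 0 < ε ≤ 1/2. If there exists a collection P of pairwise edge-disjoint directed paths in D_edge such that for at least (1/2 + ε)·2k of the 2k terminal pairs (s,t) ∈ T the collection P contains a shortest s⇝t path, then G contains a clique of size at least 2εk. -/

import Mathlib

/-- A directed path (self-avoiding walk) from `s` to `t` in the digraph with
edge relation `E`, given as the list of its vertices in order. -/
structure IsPathList {V : Type*} (E : V → V → Prop) (s t : V) (p : List V) : Prop where
  chain : p.Chain' E
  nodup : p.Nodup
  head : p.head? = some s
  last : p.getLast? = some t

/-- A shortest directed `s⇝t` path, where the length of a path is its number of vertices. -/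
def IsShortestDirPath {V : Type*} (E : V → V → Prop) (s t : V) (p : List V) : Prop :=
  IsPathList E s t p ∧ ∀ q : List V, IsPathList E s t q → p.length ≤ q.length

/-- Symmetrization of a relation: the adjacency of the undirected graph obtained by
forgetting the orientation of the edges. -/
def UAdj {V : Type*} (E : V → V → Prop) (x y : V) : Prop := E x y ∨ E y x

/-- The cost of a path: the sum of the costs of its vertices. -/
def pathCost {V : Type*} (cost : V → ℕ) (p : List V) : ℕ := (p.map cost).sum

/-- A shortest (minimum-cost) `s`–`t` path in the undirected graph obtained from `E`. -/
def IsShortestCostPath {V : Type*} (E : V → V → Prop) (cost : V → ℕ) (s t : V)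
    (p : List V) : Prop :=
  IsPathList (UAdj E) s t p ∧
    ∀ q : List V, IsPathList (UAdj E) s t q → pathCost cost p ≤ pathCost cost q

/-- The (directed) edges traversed by a path, as ordered pairs of consecutive vertices. -/
def dirEdges {V : Type*} (p : List V) : List (V × V) := p.zip p.tail

/-- Two directed paths are edge-disjoint. -/
def EdgeDisj {V : Type*} (p q : List V) : Prop := ∀ e ∈ dirEdges p, e ∉ dirEdges q

/-- The (undirected) edges traversed by a path, as unordered pairs. -/
def uEdges {V : Type*} (p : List V) : List (Sym2 V) := (dirEdges p).map fun e => s(e.1, e.2)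

/-- Two undirected paths are edge-disjoint. -/
def UEdgeDisj {V : Type*} (p q : List V) : Prop := ∀ e ∈ uEdges p, e ∉ uEdges q

/-- Two paths are vertex-disjoint. -/
def VertDisj {V : Type*} (p q : List V) : Prop := ∀ v ∈ p, v ∉ q

/-- `(q,ℓ) ∈ S_{i,j}`: for `i = j` this means `q = ℓ` and for `i ≠ j` it means that
`v_q v_ℓ` is an edge of `G`. -/
def Split {k N : ℕ} (G : SimpleGraph (Fin N)) (i j : Fin k) (q ℓ : Fin N) : Prop :=
  (i = j ∧ q = ℓ) ∨ (i ≠ j ∧ G.Adj q ℓ)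

instance {k N : ℕ} (G : SimpleGraph (Fin N)) [DecidableRel G.Adj]
    (i j : Fin k) (q ℓ : Fin N) : Decidable (Split G i j q ℓ) := by
  unfold Split; infer_instance

/-- The tags of the copies into which a grid vertex of `D_int` is split in `D_edge`. -/
inductive ETag where
  | LB | Mid | Hor | Ver | TR
  deriving DecidableEq

/-- The vertices of the graph `D_edge` (also the vertex set of `U_edge`): each grid
vertex `w_{i,j}^{q,ℓ}` of `D_int` gives rise to copies `w_LB, w_Mid, w_Hor, w_Ver, w_TR`
(of which only `{LB, Mid, TR}`, respectively `{LB, Hor, Ver, TR}`, carry edges,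
according to whether `w` is one-split or two-split), plus the terminal vertices. -/
inductive DEdgeV (k N : ℕ) where
  | grid (i j : Fin k) (q ℓ : Fin N) (t : ETag)
  | a (i : Fin k)
  | b (i : Fin k)
  | c (j : Fin k)
  | d (j : Fin k)
  deriving DecidableEq

/-- The directed edges of `D_edge`. -/
inductive DEdgeE (k N : ℕ) (G : SimpleGraph (Fin N)) : DEdgeV k N → DEdgeV k N → Prop where
  /-- one-split: `w_LB → w_Mid` -/
  | mid1 (i j : Fin k) (q ℓ : Fin N) (h : ¬ Split G i j q ℓ) :
      DEdgeE k N G (.grid i j q ℓ .LB) (.grid i j q ℓ .Mid)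
  /-- one-split: `w_Mid → w_TR` -/
  | mid2 (i j : Fin k) (q ℓ : Fin N) (h : ¬ Split G i j q ℓ) :
      DEdgeE k N G (.grid i j q ℓ .Mid) (.grid i j q ℓ .TR)
  /-- two-split: `w_LB → w_Hor` -/
  | hor1 (i j : Fin k) (q ℓ : Fin N) (h : Split G i j q ℓ) :
      DEdgeE k N G (.grid i j q ℓ .LB) (.grid i j q ℓ .Hor)
  /-- two-split: `w_Hor → w_TR` -/
  | hor2 (i j : Fin k) (q ℓ : Fin N) (h : Split G i j q ℓ) :
      DEdgeE k N G (.grid i j q ℓ .Hor) (.grid i j q ℓ .TR)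
  /-- two-split: `w_LB → w_Ver` -/
  | ver1 (i j : Fin k) (q ℓ : Fin N) (h : Split G i j q ℓ) :
      DEdgeE k N G (.grid i j q ℓ .LB) (.grid i j q ℓ .Ver)
  /-- two-split: `w_Ver → w_TR` -/
  | ver2 (i j : Fin k) (q ℓ : Fin N) (h : Split G i j q ℓ) :
      DEdgeE k N G (.grid i j q ℓ .Ver) (.grid i j q ℓ .TR)
  /-- former edge `w_{i,j}^{q,ℓ} → w_{i,j}^{q,ℓ+1}` -/
  | up (i j : Fin k) (q ℓ ℓ' : Fin N) (h : (ℓ' : ℕ) = (ℓ : ℕ) + 1) :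
      DEdgeE k N G (.grid i j q ℓ .TR) (.grid i j q ℓ' .LB)
  /-- former edge `w_{i,j}^{q,ℓ} → w_{i,j}^{q+1,ℓ}` -/
  | right (i j : Fin k) (q q' ℓ : Fin N) (h : (q' : ℕ) = (q : ℕ) + 1) :
      DEdgeE k N G (.grid i j q ℓ .TR) (.grid i j q' ℓ .LB)
  /-- former edge `w_{i,j}^{N,ℓ} → w_{i+1,j}^{1,ℓ}` -/
  | hmatch (i i' j : Fin k) (q q' ℓ : Fin N)
      (hi : (i' : ℕ) = (i : ℕ) + 1) (hq : (q : ℕ) + 1 = N) (hq' : (q' : ℕ) = 0) :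
      DEdgeE k N G (.grid i j q ℓ .TR) (.grid i' j q' ℓ .LB)
  /-- former edge `w_{i,j}^{ℓ,N} → w_{i,j+1}^{ℓ,1}` -/
  | vmatch (i j j' : Fin k) (q ℓ ℓ' : Fin N)
      (hj : (j' : ℕ) = (j : ℕ) + 1) (hl : (ℓ : ℕ) + 1 = N) (hl' : (ℓ' : ℕ) = 0) :
      DEdgeE k N G (.grid i j q ℓ .TR) (.grid i j' q ℓ' .LB)
  /-- former edge `a_i → w_{i,1}^{q,1}` -/
  | srcA (i j : Fin k) (q ℓ : Fin N) (hj : (j : ℕ) = 0) (hl : (ℓ : ℕ) = 0) :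
      DEdgeE k N G (.a i) (.grid i j q ℓ .LB)
  /-- former edge `w_{i,k}^{q,N} → b_i` -/
  | snkB (i j : Fin k) (q ℓ : Fin N) (hj : (j : ℕ) + 1 = k) (hl : (ℓ : ℕ) + 1 = N) :
      DEdgeE k N G (.grid i j q ℓ .TR) (.b i)
  /-- former edge `c_j → w_{1,j}^{1,ℓ}` -/
  | srcC (i j : Fin k) (q ℓ : Fin N) (hi : (i : ℕ) = 0) (hq : (q : ℕ) = 0) :
      DEdgeE k N G (.c j) (.grid i j q ℓ .LB)
  /-- former edge `w_{k,j}^{N,ℓ} → d_j` -/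
  | snkD (i j : Fin k) (q ℓ : Fin N) (hi : (i : ℕ) + 1 = k) (hq : (q : ℕ) + 1 = N) :
      DEdgeE k N G (.grid i j q ℓ .TR) (.d j)

/-- The three vertices `w_LB, w_?, w_TR` replacing a grid vertex `w` on (the image of)
a canonical path: the middle vertex is `w_Mid` if `w` is one-split, and is chosen among
`w_Hor` / `w_Ver` (according to `b`) if `w` is two-split. -/
def eTriple {k N : ℕ} (G : SimpleGraph (Fin N)) [DecidableRel G.Adj]
    (i j : Fin k) (q ℓ : Fin N) (b : Bool) : List (DEdgeV k N) :=
  [DEdgeV.grid i j q ℓ ETag.LB,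
   DEdgeV.grid i j q ℓ
     (if Split G i j q ℓ then (if b then ETag.Hor else ETag.Ver) else ETag.Mid),
   DEdgeV.grid i j q ℓ ETag.TR]

/-- An image in `D_edge`/`U_edge` of the horizontal canonical path
`Canonical(r; c_j⇝d_j)` of `D_int`, determined by a choice `χ` of `Hor`/`Ver`
at each two-split vertex. -/
def imageH {k N : ℕ} (G : SimpleGraph (Fin N)) [DecidableRel G.Adj]
    (χ : Fin k → Fin N → Bool) (j : Fin k) (r : Fin N) : List (DEdgeV k N) :=
  DEdgeV.c j ::
    (((List.finRange k).flatMap fun i =>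
        (List.finRange N).flatMap fun q => eTriple G i j q r (χ i q)) ++ [DEdgeV.d j])

/-- An image in `D_edge`/`U_edge` of the vertical canonical path
`Canonical(r; a_i⇝b_i)` of `D_int`, determined by a choice `χ` of `Hor`/`Ver`
at each two-split vertex. -/
def imageV {k N : ℕ} (G : SimpleGraph (Fin N)) [DecidableRel G.Adj]
    (χ : Fin k → Fin N → Bool) (i : Fin k) (r : Fin N) : List (DEdgeV k N) :=
  DEdgeV.a i ::
    (((List.finRange k).flatMap fun j =>
        (List.finRange N).flatMap fun ℓ => eTriple G i j r ℓ (χ j ℓ)) ++ [DEdgeV.b i])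

/-- `Canonical_edge(r; c_j⇝d_j)`: the image of `Canonical(r; c_j⇝d_j)` choosing
`w_LB → w_Hor → w_TR` at every two-split vertex. -/
def canonEdgeH {k N : ℕ} (G : SimpleGraph (Fin N)) [DecidableRel G.Adj]
    (j : Fin k) (r : Fin N) : List (DEdgeV k N) :=
  imageH G (fun _ _ => true) j r

/-- `Canonical_edge(r; a_i⇝b_i)`: the image of `Canonical(r; a_i⇝b_i)` choosing
`w_LB → w_Ver → w_TR` at every two-split vertex. -/
def canonEdgeV {k N : ℕ} (G : SimpleGraph (Fin N)) [DecidableRel G.Adj]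
    (i : Fin k) (r : Fin N) : List (DEdgeV k N) :=
  imageV G (fun _ _ => false) i r
/-- The source of the `x`-th terminal pair of `T`: `a_i` for `x = inl i`
(pair `(a_i, b_i)`), and `c_j` for `x = inr j` (pair `(c_j, d_j)`). -/
def eSrc {k N : ℕ} (x : Fin k ⊕ Fin k) : DEdgeV k N :=
  match x with
  | .inl i => DEdgeV.a i
  | .inr j => DEdgeV.c j

/-- The sink of the `x`-th terminal pair of `T`. -/
def eDst {k N : ℕ} (x : Fin k ⊕ Fin k) : DEdgeV k N :=
  match x with
  | .inl i => DEdgeV.b i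
  | .inr j => DEdgeV.d j
namespace DESound

open List

variable {V : Type*}

/-! ### Generic path lemmas -/

lemma mem_dirEdges_of_getElem {p : List V} {m : ℕ} (h : m + 1 < p.length) :
    (p[m], p[m + 1]) ∈ dirEdges p := by
  rw [dirEdges, List.mem_iff_getElem]
  refine ⟨m, ?_, ?_⟩
  · simpa [List.length_zip, List.length_tail] using by omega
  · rw [List.getElem_zip, List.getElem_tail]

lemma dirEdges_getElem_eq {p : List V} {e : V × V} (he : e ∈ dirEdges p) :
    ∃ m, ∃ (h : m + 1 < p.length), p[m] = e.1 ∧ p[m + 1] = e.2 := by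
  rw [dirEdges, List.mem_iff_getElem] at he
  obtain ⟨m, hm, hme⟩ := he
  have hm' : m + 1 < p.length := by
    simp [List.length_zip, List.length_tail] at hm; omega
  refine ⟨m, hm', ?_, ?_⟩ <;>
    rw [List.getElem_zip (h := hm), List.getElem_tail] at hme <;>
    simp [← hme]

lemma chain'_rel {E : V → V → Prop} {p : List V} (hc : p.Chain' E) {m : ℕ}
    (h : m + 1 < p.length) : E p[m] p[m + 1] := by
  simp only [List.Chain', List.isChain_iff_getElem] at hc
  have := hc m (by omega)
  simpa [List.get_eq_getElem] using this

/-- telescoping upper bound along a chain -/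
lemma chain'_g_upper {E : V → V → Prop} {g : V → ℤ} {p : List V}
    (hc : p.Chain' E) (hE : ∀ x y, E x y → g y ≤ g x + 1) :
    ∀ m, (hm : m < p.length) → (h0 : 0 < p.length) → g p[m] ≤ g p[0] + m := by
  intro m
  induction m with
  | zero => intro hm h0; simp
  | succ n ih =>
    intro hm h0
    have h1 : g p[n + 1] ≤ g p[n] + 1 := hE _ _ (chain'_rel hc hm)
    have := ih (by omega) h0
    push_cast
    omega

/-- telescoping bound from a position to the end -/
lemma chain'_g_lower {E : V → V → Prop} {g : V → ℤ} {p : List V}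
    (hc : p.Chain' E) (hE : ∀ x y, E x y → g y ≤ g x + 1) :
    ∀ d m (h0 : 0 < p.length) (h : m + d = p.length - 1),
      g p[p.length - 1] ≤ g p[m] + d := by
  intro d
  induction d with
  | zero => intro m h0 h; simp [show p.length - 1 = m by omega]
  | succ n ih =>
    intro m h0 h
    have h1 : g p[m + 1] ≤ g p[m] + 1 :=
      hE _ _ (chain'_rel hc (by omega))
    have := ih (m + 1) h0 (by omega)
    push_cast
    omega

/-- In a path whose length exactly matches the potential difference, the potential
at position `m` equals `g first + m`. -/
lemma chain'_g_exact {E : V → V → Prop} {g : V → ℤ} {p : List V}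
    (hc : p.Chain' E) (hE : ∀ x y, E x y → g y ≤ g x + 1)
    (h0 : 0 < p.length)
    (hlen : (p.length : ℤ) = g p[p.length - 1] - g p[0] + 1)
    {m : ℕ} (hm : m < p.length) : g p[m] = g p[0] + m := by
  have hu := chain'_g_upper hc hE m hm h0
  have hl := chain'_g_lower hc hE (p.length - 1 - m) m h0 (by omega)
  have : ((p.length - 1 - m : ℕ) : ℤ) = (p.length : ℤ) - 1 - m := by
    push_cast; omega
  omega

end DESound
namespace DESound

/-! ### Potential functions on `DEdgeV` -/

def tagval : ETag → ℤ
  | .LB => 0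
  | .TR => 2
  | _ => 1

/-- potential for vertical (`a⇝b`) paths: essentially the global column -/
def gV (k N : ℕ) : DEdgeV k N → ℤ
  | .grid _ j _ ℓ t => 3 * ((j : ℤ) * N + (ℓ : ℤ)) + tagval t
  | .a _ => -1
  | .b _ => 3 * (k * N)
  | .c _ => 3 * (k * N) + 6
  | .d _ => 0

/-- potential for horizontal (`c⇝d`) paths: essentially the global row -/
def gH (k N : ℕ) : DEdgeV k N → ℤ
  | .grid i _ q _ t => 3 * ((i : ℤ) * N + (q : ℤ)) + tagval t
  | .c _ => -1
  | .d _ => 3 * (k * N)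
  | .a _ => 3 * (k * N) + 6
  | .b _ => 0

lemma colZ_le {k N : ℕ} (j : Fin k) (ℓ : Fin N) : (j : ℤ) * N + (ℓ : ℤ) + 1 ≤ (k : ℤ) * N := by
  have hj : (j : ℤ) + 1 ≤ k := by exact_mod_cast j.isLt
  have hl : (ℓ : ℤ) + 1 ≤ N := by exact_mod_cast ℓ.isLt
  nlinarith [hj, hl]

lemma colZ_nonneg {k N : ℕ} (j : Fin k) (ℓ : Fin N) : 0 ≤ (j : ℤ) * N + (ℓ : ℤ) := by
  positivity

lemma gV_step {k N : ℕ} {G : SimpleGraph (Fin N)} {x y : DEdgeV k N}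
    (h : DEdgeE k N G x y) : gV k N y ≤ gV k N x + 1 := by
  cases h with
  | mid1 i j q ℓ h => simp [gV, tagval]
  | mid2 i j q ℓ h => simp [gV, tagval]; linarith
  | hor1 i j q ℓ h => simp [gV, tagval]
  | hor2 i j q ℓ h => simp [gV, tagval]; linarith
  | ver1 i j q ℓ h => simp [gV, tagval]
  | ver2 i j q ℓ h => simp [gV, tagval]; linarith
  | up i j q ℓ ℓ' h =>
      have h' : (ℓ' : ℤ) = (ℓ : ℤ) + 1 := by exact_mod_cast h
      simp [gV, tagval]; linarith
  | right i j q q' ℓ h => simp [gV, tagval]; linarith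
  | hmatch i i' j q q' ℓ hi hq hq' => simp [gV, tagval]; linarith
  | vmatch i j j' q ℓ ℓ' hj hl hl' =>
      have e1 : (j' : ℤ) = (j : ℤ) + 1 := by exact_mod_cast hj
      have e2 : (ℓ : ℤ) + 1 = N := by exact_mod_cast hl
      have e3 : (ℓ' : ℤ) = 0 := by exact_mod_cast hl'
      have e4 : (j' : ℤ) * N = (j : ℤ) * N + N := by rw [e1]; ring
      simp [gV, tagval]; linarith
  | srcA i j q ℓ hj hl =>
      have e1 : (j : ℤ) = 0 := by exact_mod_cast hj
      have e2 : (ℓ : ℤ) = 0 := by exact_mod_cast hl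
      simp [gV, tagval, e1, e2]
  | snkB i j q ℓ hj hl =>
      have e1 : (j : ℤ) + 1 = k := by exact_mod_cast hj
      have e2 : (ℓ : ℤ) + 1 = N := by exact_mod_cast hl
      have e3 : ((j : ℤ) + 1) * N = (k : ℤ) * N := by rw [e1]
      simp [gV, tagval]; nlinarith [e2, e3]
  | srcC i j q ℓ hi hq =>
      have := colZ_le j ℓ
      simp [gV, tagval]; linarith
  | snkD i j q ℓ hi hq =>
      have := colZ_nonneg j ℓ
      simp [gV, tagval]; linarith

lemma gH_step {k N : ℕ} {G : SimpleGraph (Fin N)} {x y : DEdgeV k N}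
    (h : DEdgeE k N G x y) : gH k N y ≤ gH k N x + 1 := by
  cases h with
  | mid1 i j q ℓ h => simp [gH, tagval]
  | mid2 i j q ℓ h => simp [gH, tagval]; linarith
  | hor1 i j q ℓ h => simp [gH, tagval]
  | hor2 i j q ℓ h => simp [gH, tagval]; linarith
  | right i j q q' ℓ h =>
      have h' : (q' : ℤ) = (q : ℤ) + 1 := by exact_mod_cast h
      simp [gH, tagval]; linarith
  | ver1 i j q ℓ h => simp [gH, tagval]
  | ver2 i j q ℓ h => simp [gH, tagval]; linarith
  | up i j q ℓ ℓ' h => simp [gH, tagval]; linarith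
  | vmatch i j j' q ℓ ℓ' hj hl hl' => simp [gH, tagval]; linarith
  | hmatch i i' j q q' ℓ hi hq hq' =>
      have e1 : (i' : ℤ) = (i : ℤ) + 1 := by exact_mod_cast hi
      have e2 : (q : ℤ) + 1 = N := by exact_mod_cast hq
      have e3 : (q' : ℤ) = 0 := by exact_mod_cast hq'
      have e4 : (i' : ℤ) * N = (i : ℤ) * N + N := by rw [e1]; ring
      simp [gH, tagval]; linarith
  | srcC i j q ℓ hi hq =>
      have e1 : (i : ℤ) = 0 := by exact_mod_cast hi
      have e2 : (q : ℤ) = 0 := by exact_mod_cast hq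
      simp [gH, tagval, e1, e2]
  | snkD i j q ℓ hi hq =>
      have e1 : (i : ℤ) + 1 = k := by exact_mod_cast hi
      have e2 : (q : ℤ) + 1 = N := by exact_mod_cast hq
      have e3 : ((i : ℤ) + 1) * N = (k : ℤ) * N := by rw [e1]
      simp [gH, tagval]; nlinarith [e2, e3]
  | srcA i j q ℓ hj hl =>
      have := colZ_le i q
      simp [gH, tagval]; linarith
  | snkB i j q ℓ hj hl =>
      have := colZ_nonneg i q
      simp [gH, tagval]; linarith

end DESound
namespace DESound

def rowOKV {k N : ℕ} (i : Fin k) (r : Fin N) : DEdgeV k N → Prop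
  | .grid i' _ q _ _ => i' = i ∧ q = r
  | .a _ => False
  | .c _ => False
  | .b _ => True
  | .d _ => True

def colOKH {k N : ℕ} (j : Fin k) (s : Fin N) : DEdgeV k N → Prop
  | .grid _ j' _ ℓ _ => j' = j ∧ ℓ = s
  | .a _ => False
  | .c _ => False
  | .b _ => True
  | .d _ => True

lemma rowOKV_step {k N : ℕ} {G : SimpleGraph (Fin N)} {x y : DEdgeV k N}
    {i : Fin k} {r : Fin N}
    (h : DEdgeE k N G x y) (hg : gV k N y = gV k N x + 1) (hx : rowOKV i r x) :
    rowOKV i r y := by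
  cases h with
  | mid1 i j q ℓ h => exact hx
  | mid2 i j q ℓ h => exact hx
  | hor1 i j q ℓ h => exact hx
  | hor2 i j q ℓ h => exact hx
  | ver1 i j q ℓ h => exact hx
  | ver2 i j q ℓ h => exact hx
  | up i j q ℓ ℓ' h => exact hx
  | vmatch i j j' q ℓ ℓ' hj hl hl' => exact hx
  | right i j q q' ℓ h => simp [gV, tagval] at hg; linarith
  | hmatch i i' j q q' ℓ hi hq hq' => simp [gV, tagval] at hg; linarith
  | srcA i j q ℓ hj hl => exact hx.elim
  | srcC i j q ℓ hi hq => exact hx.elim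
  | snkB i j q ℓ hj hl => trivial
  | snkD i j q ℓ hi hq => trivial

lemma colOKH_step {k N : ℕ} {G : SimpleGraph (Fin N)} {x y : DEdgeV k N}
    {j : Fin k} {s : Fin N}
    (h : DEdgeE k N G x y) (hg : gH k N y = gH k N x + 1) (hx : colOKH j s x) :
    colOKH j s y := by
  cases h with
  | mid1 i j q ℓ h => exact hx
  | mid2 i j q ℓ h => exact hx
  | hor1 i j q ℓ h => exact hx
  | hor2 i j q ℓ h => exact hx
  | ver1 i j q ℓ h => exact hx
  | ver2 i j q ℓ h => exact hx
  | right i j q q' ℓ h => exact hx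
  | hmatch i i' j q q' ℓ hi hq hq' => exact hx
  | up i j q ℓ ℓ' h => simp [gH, tagval] at hg; linarith
  | vmatch i j j' q ℓ ℓ' hj hl hl' => simp [gH, tagval] at hg; linarith
  | srcA i j q ℓ hj hl => exact hx.elim
  | srcC i j q ℓ hi hq => exact hx.elim
  | snkB i j q ℓ hj hl => trivial
  | snkD i j q ℓ hi hq => trivial

lemma col_inj {k N : ℕ} (hN : 1 ≤ N) {j j' : Fin k} {ℓ ℓ' : Fin N}
    (h : (j : ℤ) * N + (ℓ : ℤ) = (j' : ℤ) * N + (ℓ' : ℤ)) : j = j' ∧ ℓ = ℓ' := by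
  have hl : (ℓ : ℤ) < N := by exact_mod_cast ℓ.isLt
  have hl' : (ℓ' : ℤ) < N := by exact_mod_cast ℓ'.isLt
  have hl0 : (0 : ℤ) ≤ (ℓ : ℤ) := by positivity
  have hl0' : (0 : ℤ) ≤ (ℓ' : ℤ) := by positivity
  have hjj : (j : ℤ) = (j' : ℤ) := by
    rcases lt_trichotomy (j : ℤ) (j' : ℤ) with hlt | heq | hgt
    · exfalso
      have : (j : ℤ) * N + N ≤ (j' : ℤ) * N := by nlinarith
      linarith
    · exact heq
    · exfalso
      have : (j' : ℤ) * N + N ≤ (j : ℤ) * N := by nlinarith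
      linarith
  constructor
  · exact Fin.ext (by exact_mod_cast hjj)
  · refine Fin.ext ?_
    have h2 : (ℓ : ℤ) = ℓ' := by nlinarith [hjj]
    exact_mod_cast h2

end DESound
namespace DESound

lemma vert_struct {k N : ℕ} (hN : 1 ≤ N) (hk : 1 ≤ k) {G : SimpleGraph (Fin N)}
    (i : Fin k) {p : List (DEdgeV k N)}
    (hp : IsPathList (DEdgeE k N G) (.a i) (.b i) p)
    (hlen : p.length = 3 * (k * N) + 2) :
    ∃ r : Fin N, ∀ (j : Fin k) (ℓ : Fin N), ∃ t : ETag,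
      DEdgeE k N G (.grid i j r ℓ .LB) (.grid i j r ℓ t) ∧
      ((DEdgeV.grid i j r ℓ .LB, DEdgeV.grid i j r ℓ t) ∈ dirEdges p) := by
  obtain ⟨KN, hKN⟩ : ∃ K, k * N = K := ⟨_, rfl⟩
  have hKN1 : 1 ≤ KN := by rw [← hKN]; exact Nat.one_le_iff_ne_zero.mpr (by positivity)
  rw [hKN] at hlen
  have h0 : 0 < p.length := by omega
  have hne : p ≠ [] := List.length_pos_iff.mp h0
  have hhead : p[0] = DEdgeV.a i := by
    have := hp.head
    rw [List.head?_eq_head hne, List.head_eq_getElem] at this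
    exact Option.some_injective _ this
  have hlast : p[p.length - 1] = DEdgeV.b i := by
    have := hp.last
    rw [List.getLast?_eq_getLast hne, List.getLast_eq_getElem] at this
    exact Option.some_injective _ this
  have hg0 : gV k N p[0] = -1 := by rw [hhead]; rfl
  have hex : ∀ m, (hm : m < p.length) → gV k N p[m] = (m : ℤ) - 1 := by
    intro m hm
    have := chain'_g_exact hp.chain (fun x y h => gV_step h) h0 ?_ hm
    · rw [hg0] at this; omega
    · rw [hlast, hg0, hlen]
      show ((3 * KN + 2 : ℕ) : ℤ) = 3 * ((k : ℤ) * N) - (-1) + 1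
      have : ((k : ℤ) * N) = (KN : ℤ) := by rw [← hKN]; push_cast; ring
      rw [this]; push_cast; ring
  -- first step: srcA
  have e0 : DEdgeE k N G (DEdgeV.a i) p[1] := by
    have := chain'_rel hp.chain (m := 0) (by omega)
    rwa [hhead] at this
  obtain ⟨r, hv1⟩ : ∃ r : Fin N, rowOKV i r p[1] := by
    generalize hz : p[1] = z at e0
    cases e0 with
    | srcA i j q ℓ hj hl => exact ⟨q, rfl, rfl⟩
  refine ⟨r, ?_⟩
  -- row invariant
  have hrow : ∀ m, 1 ≤ m → (hm : m < p.length) → rowOKV i r p[m] := by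
    intro m
    induction m with
    | zero => omega
    | succ n ih =>
      intro _ hm
      by_cases hn0 : n = 0
      · subst hn0; simpa using hv1
      · have hn : 1 ≤ n := by omega
        have hrn := ih hn (by omega)
        have hedge := chain'_rel hp.chain (m := n) (by omega)
        have hgs : gV k N p[n + 1] = gV k N p[n] + 1 := by
          rw [hex n (by omega), hex (n + 1) (by omega)]; push_cast; ring
        exact rowOKV_step hedge hgs hrn
  intro j ℓ
  obtain ⟨c, hc⟩ : ∃ c, (j : ℕ) * N + (ℓ : ℕ) = c := ⟨_, rfl⟩
  have hcZ : (j : ℤ) * N + (ℓ : ℤ) = (c : ℤ) := by rw [← hc]; push_cast; ring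
  have hclt : c < KN := by
    rw [← hKN, ← hc]
    have h1 : (j : ℕ) + 1 ≤ k := j.isLt
    have h2 : (ℓ : ℕ) + 1 ≤ N := ℓ.isLt
    calc (j : ℕ) * N + (ℓ : ℕ) < (j : ℕ) * N + N := by omega
    _ = ((j : ℕ) + 1) * N := by ring
    _ ≤ k * N := Nat.mul_le_mul_right N h1
  have hm1 : 3 * c + 1 + 1 < p.length := by omega
  have hgm : gV k N p[3 * c + 1] = 3 * (c : ℤ) := by
    rw [hex (3 * c + 1) (by omega)]; push_cast; ring
  have hrowm := hrow (3 * c + 1) (by omega) (by omega)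
  have hedge := chain'_rel hp.chain (m := 3 * c + 1) hm1
  have hmem := mem_dirEdges_of_getElem hm1
  -- identify p[3c+1]
  have hpm : p[3 * c + 1] = DEdgeV.grid i j r ℓ ETag.LB := by
    cases hv : p[3 * c + 1] with
    | grid i' j' q' ℓ' t' =>
      rw [hv] at hrowm hgm
      obtain ⟨hi', hq'⟩ : i' = i ∧ q' = r := hrowm
      have hgm' : 3 * ((j' : ℤ) * N + (ℓ' : ℤ)) + tagval t' = 3 * (c : ℤ) := hgm
      obtain ⟨C', hC'⟩ : ∃ C' : ℤ, (j' : ℤ) * N + (ℓ' : ℤ) = C' := ⟨_, rfl⟩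
      rw [hC'] at hgm'
      obtain ⟨ht', hCc⟩ : t' = ETag.LB ∧ C' = (c : ℤ) := by
        cases t' with
        | LB => simp [tagval] at hgm'; exact ⟨rfl, by omega⟩
        | Mid => simp [tagval] at hgm'; exact absurd hgm' (by omega)
        | Hor => simp [tagval] at hgm'; exact absurd hgm' (by omega)
        | Ver => simp [tagval] at hgm'; exact absurd hgm' (by omega)
        | TR => simp [tagval] at hgm'; exact absurd hgm' (by omega)
      have hcol : (j' : ℤ) * N + (ℓ' : ℤ) = (j : ℤ) * N + (ℓ : ℤ) := by
        rw [hC', hCc, hcZ]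
      obtain ⟨hj', hl'⟩ := col_inj hN hcol.symm
      rw [hi', hq', ht', ← hj', ← hl']
    | a i' => rw [hv] at hrowm; exact hrowm.elim
    | c i' => rw [hv] at hrowm; exact hrowm.elim
    | b i' =>
      rw [hv] at hgm
      have : (3 : ℤ) * ((k : ℤ) * N) = 3 * (c : ℤ) := hgm
      have hkn : ((k : ℤ) * N) = (KN : ℤ) := by rw [← hKN]; push_cast; ring
      rw [hkn] at this
      exfalso; omega
    | d i' =>
      exfalso
      rw [hv] at hedge
      cases hedge
  rw [hpm] at hedge hmem
  generalize hz : p[3 * c + 1 + 1] = z at hedge hmem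
  cases hedge with
  | mid1 _ _ _ _ hs => exact ⟨ETag.Mid, DEdgeE.mid1 _ _ _ _ hs, hmem⟩
  | hor1 _ _ _ _ hs => exact ⟨ETag.Hor, DEdgeE.hor1 _ _ _ _ hs, hmem⟩
  | ver1 _ _ _ _ hs => exact ⟨ETag.Ver, DEdgeE.ver1 _ _ _ _ hs, hmem⟩

end DESound
namespace DESound

lemma horiz_struct {k N : ℕ} (hN : 1 ≤ N) (hk : 1 ≤ k) {G : SimpleGraph (Fin N)}
    (j : Fin k) {p : List (DEdgeV k N)}
    (hp : IsPathList (DEdgeE k N G) (.c j) (.d j) p)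
    (hlen : p.length = 3 * (k * N) + 2) :
    ∃ s : Fin N, ∀ (i : Fin k) (q : Fin N), ∃ t : ETag,
      DEdgeE k N G (.grid i j q s .LB) (.grid i j q s t) ∧
      ((DEdgeV.grid i j q s .LB, DEdgeV.grid i j q s t) ∈ dirEdges p) := by
  obtain ⟨KN, hKN⟩ : ∃ K, k * N = K := ⟨_, rfl⟩
  have hKN1 : 1 ≤ KN := by rw [← hKN]; exact Nat.one_le_iff_ne_zero.mpr (by positivity)
  rw [hKN] at hlen
  have h0 : 0 < p.length := by omega
  have hne : p ≠ [] := List.length_pos_iff.mp h0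
  have hhead : p[0] = DEdgeV.c j := by
    have := hp.head
    rw [List.head?_eq_head hne, List.head_eq_getElem] at this
    exact Option.some_injective _ this
  have hlast : p[p.length - 1] = DEdgeV.d j := by
    have := hp.last
    rw [List.getLast?_eq_getLast hne, List.getLast_eq_getElem] at this
    exact Option.some_injective _ this
  have hg0 : gH k N p[0] = -1 := by rw [hhead]; rfl
  have hex : ∀ m, (hm : m < p.length) → gH k N p[m] = (m : ℤ) - 1 := by
    intro m hm
    have := chain'_g_exact hp.chain (fun x y h => gH_step h) h0 ?_ hm
    · rw [hg0] at this; omega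
    · rw [hlast, hg0, hlen]
      show ((3 * KN + 2 : ℕ) : ℤ) = 3 * ((k : ℤ) * N) - (-1) + 1
      have : ((k : ℤ) * N) = (KN : ℤ) := by rw [← hKN]; push_cast; ring
      rw [this]; push_cast; ring
  -- first step: srcA
  have e0 : DEdgeE k N G (DEdgeV.c j) p[1] := by
    have := chain'_rel hp.chain (m := 0) (by omega)
    rwa [hhead] at this
  obtain ⟨s, hv1⟩ : ∃ s : Fin N, colOKH j s p[1] := by
    generalize hz : p[1] = z at e0
    cases e0 with
    | srcC i j q ℓ hi hq => exact ⟨ℓ, rfl, rfl⟩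
  refine ⟨s, ?_⟩
  -- row invariant
  have hrow : ∀ m, 1 ≤ m → (hm : m < p.length) → colOKH j s p[m] := by
    intro m
    induction m with
    | zero => omega
    | succ n ih =>
      intro _ hm
      by_cases hn0 : n = 0
      · subst hn0; simpa using hv1
      · have hn : 1 ≤ n := by omega
        have hrn := ih hn (by omega)
        have hedge := chain'_rel hp.chain (m := n) (by omega)
        have hgs : gH k N p[n + 1] = gH k N p[n] + 1 := by
          rw [hex n (by omega), hex (n + 1) (by omega)]; push_cast; ring
        exact colOKH_step hedge hgs hrn
  intro i q
  obtain ⟨c, hc⟩ : ∃ c, (i : ℕ) * N + (q : ℕ) = c := ⟨_, rfl⟩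
  have hcZ : (i : ℤ) * N + (q : ℤ) = (c : ℤ) := by rw [← hc]; push_cast; ring
  have hclt : c < KN := by
    rw [← hKN, ← hc]
    have h1 : (i : ℕ) + 1 ≤ k := i.isLt
    have h2 : (q : ℕ) + 1 ≤ N := q.isLt
    calc (i : ℕ) * N + (q : ℕ) < (i : ℕ) * N + N := by omega
    _ = ((i : ℕ) + 1) * N := by ring
    _ ≤ k * N := Nat.mul_le_mul_right N h1
  have hm1 : 3 * c + 1 + 1 < p.length := by omega
  have hgm : gH k N p[3 * c + 1] = 3 * (c : ℤ) := by
    rw [hex (3 * c + 1) (by omega)]; push_cast; ring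
  have hrowm := hrow (3 * c + 1) (by omega) (by omega)
  have hedge := chain'_rel hp.chain (m := 3 * c + 1) hm1
  have hmem := mem_dirEdges_of_getElem hm1
  -- identify p[3c+1]
  have hpm : p[3 * c + 1] = DEdgeV.grid i j q s ETag.LB := by
    cases hv : p[3 * c + 1] with
    | grid i' j' q' ℓ' t' =>
      rw [hv] at hrowm hgm
      obtain ⟨hj', hl'⟩ : j' = j ∧ ℓ' = s := hrowm
      have hgm' : 3 * ((i' : ℤ) * N + (q' : ℤ)) + tagval t' = 3 * (c : ℤ) := hgm
      obtain ⟨C', hC'⟩ : ∃ C' : ℤ, (i' : ℤ) * N + (q' : ℤ) = C' := ⟨_, rfl⟩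
      rw [hC'] at hgm'
      obtain ⟨ht', hCc⟩ : t' = ETag.LB ∧ C' = (c : ℤ) := by
        cases t' with
        | LB => simp [tagval] at hgm'; exact ⟨rfl, by omega⟩
        | Mid => simp [tagval] at hgm'; exact absurd hgm' (by omega)
        | Hor => simp [tagval] at hgm'; exact absurd hgm' (by omega)
        | Ver => simp [tagval] at hgm'; exact absurd hgm' (by omega)
        | TR => simp [tagval] at hgm'; exact absurd hgm' (by omega)
      have hcol : (i' : ℤ) * N + (q' : ℤ) = (i : ℤ) * N + (q : ℤ) := by
        rw [hC', hCc, hcZ]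
      obtain ⟨hi', hq'⟩ := col_inj hN hcol.symm
      rw [hj', hl', ht', ← hi', ← hq']
    | a i' => rw [hv] at hrowm; exact hrowm.elim
    | c i' => rw [hv] at hrowm; exact hrowm.elim
    | d i' =>
      rw [hv] at hgm
      have : (3 : ℤ) * ((k : ℤ) * N) = 3 * (c : ℤ) := hgm
      have hkn : ((k : ℤ) * N) = (KN : ℤ) := by rw [← hKN]; push_cast; ring
      rw [hkn] at this
      exfalso; omega
    | b i' =>
      exfalso
      rw [hv] at hedge
      cases hedge
  rw [hpm] at hedge hmem
  generalize hz : p[3 * c + 1 + 1] = z at hedge hmem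
  cases hedge with
  | mid1 _ _ _ _ hs => exact ⟨ETag.Mid, DEdgeE.mid1 _ _ _ _ hs, hmem⟩
  | hor1 _ _ _ _ hs => exact ⟨ETag.Hor, DEdgeE.hor1 _ _ _ _ hs, hmem⟩
  | ver1 _ _ _ _ hs => exact ⟨ETag.Ver, DEdgeE.ver1 _ _ _ _ hs, hmem⟩

end DESound
namespace DESound

def mkFin (n : ℕ) (h : 0 < n) (x : ℕ) : Fin n := ⟨x % n, Nat.mod_lt _ h⟩

lemma mkFin_val {n : ℕ} (h : 0 < n) {x : ℕ} (hx : x < n) : ((mkFin n h x : Fin n) : ℕ) = x :=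
  Nat.mod_eq_of_lt hx

lemma divmod_unique {N a b c : ℕ} (hb : b < N) (h : c = N * a + b) :
    c / N = a ∧ c % N = b := by
  subst h
  have hN : 0 < N := by omega
  constructor
  · rw [Nat.mul_add_div hN, Nat.div_eq_of_lt hb]; omega
  · rw [Nat.mul_add_mod, Nat.mod_eq_of_lt hb]

lemma div_lt_of_lt_mul' {c k N : ℕ} (hc : c < k * N) : c / N < k := by
  have hN : 0 < N := by by_contra h; push_neg at h; interval_cases N <;> omega
  exact (Nat.div_lt_iff_lt_mul hN).mpr hc

/-- canonical vertical path vertex function -/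
def fV (k N : ℕ) (hk : 0 < k) (hN : 0 < N) (G : SimpleGraph (Fin N)) [DecidableRel G.Adj]
    (i : Fin k) (r : Fin N) (m : ℕ) : DEdgeV k N :=
  if m = 0 then .a i
  else if m = 3 * (k * N) + 1 then .b i
  else .grid i (mkFin k hk ((m - 1) / 3 / N)) r (mkFin N hN ((m - 1) / 3 % N))
    (if (m - 1) % 3 = 0 then .LB else if (m - 1) % 3 = 2 then .TR
     else if Split G i (mkFin k hk ((m - 1) / 3 / N)) r (mkFin N hN ((m - 1) / 3 % N))
       then .Ver else .Mid)

variable {k N : ℕ} (hk : 0 < k) (hN : 0 < N) (G : SimpleGraph (Fin N)) [DecidableRel G.Adj]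

lemma fV_eq (i : Fin k) (r : Fin N) (c t : ℕ) (hc : c < k * N) (ht : t < 3) :
    fV k N hk hN G i r (3 * c + t + 1) =
      DEdgeV.grid i (mkFin k hk (c / N)) r (mkFin N hN (c % N))
        (if t = 0 then .LB else if t = 2 then .TR
         else if Split G i (mkFin k hk (c / N)) r (mkFin N hN (c % N)) then .Ver else .Mid) := by
  have h1 : ¬(3 * c + t + 1 = 0) := by omega
  have h2 : ¬(3 * c + t + 1 = 3 * (k * N) + 1) := by omega
  have e1 : (3 * c + t + 1 - 1) / 3 = c := by omega
  have e2 : (3 * c + t + 1 - 1) % 3 = t := by omega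
  simp only [fV, if_neg h1, if_neg h2, e1, e2]

lemma fV_edge (i : Fin k) (r : Fin N) (m : ℕ) (hm : m + 1 < 3 * (k * N) + 2) :
    DEdgeE k N G (fV k N hk hN G i r m) (fV k N hk hN G i r (m + 1)) := by
  have hKN : 0 < k * N := Nat.mul_pos hk hN
  by_cases h0 : m = 0
  · -- srcA
    subst h0
    have : fV k N hk hN G i r 0 = .a i := by simp [fV]
    rw [this, show (0 + 1 : ℕ) = 3 * 0 + 0 + 1 from rfl, fV_eq hk hN G i r 0 0 hKN (by omega)]
    simp only [if_pos rfl]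
    refine DEdgeE.srcA i _ r _ ?_ ?_
    · rw [Nat.zero_div]; exact mkFin_val hk hk
    · rw [Nat.zero_mod]; exact mkFin_val hN hN
  · obtain ⟨c, t, ht, hc, rfl⟩ : ∃ c t, t < 3 ∧ c < k * N ∧ m = 3 * c + t + 1 := by
      refine ⟨(m - 1) / 3, (m - 1) % 3, by omega, by omega, by omega⟩
    -- facts about c
    obtain ⟨j, l, hl, hcjl⟩ : ∃ j l, l < N ∧ c = N * j + l :=
      ⟨c / N, c % N, Nat.mod_lt _ hN, (Nat.div_add_mod c N).symm⟩
    have hdiv : c / N = j ∧ c % N = l := divmod_unique hl hcjl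
    have hjk : j < k := by
      have := div_lt_of_lt_mul' hc
      rw [hdiv.1] at this; exact this
    rw [fV_eq hk hN G i r c t hc ht]
    interval_cases t
    · -- LB -> mid
      rw [show 3 * c + 0 + 1 + 1 = 3 * c + 1 + 1 from rfl,
        fV_eq hk hN G i r c 1 hc (by omega)]
      norm_num
      by_cases hsp : Split G i (mkFin k hk (c / N)) r (mkFin N hN (c % N))
      · rw [if_pos hsp]; exact DEdgeE.ver1 _ _ _ _ hsp
      · rw [if_neg hsp]; exact DEdgeE.mid1 _ _ _ _ hsp
    · -- mid -> TR
      rw [show 3 * c + 1 + 1 + 1 = 3 * c + 2 + 1 from rfl,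
        fV_eq hk hN G i r c 2 hc (by omega)]
      norm_num
      by_cases hsp : Split G i (mkFin k hk (c / N)) r (mkFin N hN (c % N))
      · rw [if_pos hsp]; exact DEdgeE.ver2 _ _ _ _ hsp
      · rw [if_neg hsp]; exact DEdgeE.mid2 _ _ _ _ hsp
    · -- TR -> next LB or b
      norm_num
      by_cases hend : c + 1 = k * N
      · -- snkB
        have hb : fV k N hk hN G i r (3 * c + 2 + 1 + 1) = .b i := by
          have : 3 * c + 2 + 1 + 1 = 3 * (k * N) + 1 := by omega
          simp [fV, this]
        rw [hb]
        -- j = k - 1, l = N - 1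
        have hrepr : c = N * (k - 1) + (N - 1) := by
          have hexp : k * N = N * (k - 1) + N := by
            obtain ⟨k', rfl⟩ : ∃ k', k = k' + 1 := ⟨k - 1, by omega⟩
            simp only [Nat.add_sub_cancel]
            ring
          omega
        have hdm2 : c / N = k - 1 ∧ c % N = N - 1 :=
          divmod_unique (by omega) hrepr
        have hjl : j = k - 1 ∧ l = N - 1 := by
          constructor
          · rw [← hdiv.1, hdm2.1]
          · rw [← hdiv.2, hdm2.2]
        refine DEdgeE.snkB i (mkFin k hk (c / N)) r (mkFin N hN (c % N)) ?_ ?_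
        · rw [hdiv.1, mkFin_val hk hjk, hjl.1]; omega
        · rw [hdiv.2, mkFin_val hN hl, hjl.2]; omega
      · -- up or vmatch
        have hc1 : c + 1 < k * N := by omega
        rw [show 3 * c + 2 + 1 + 1 = 3 * (c + 1) + 0 + 1 from by ring,
          fV_eq hk hN G i r (c + 1) 0 hc1 (by omega)]
        norm_num
        by_cases hwrap : l + 1 = N
        · -- vmatch
          have hdm : (c + 1) / N = j + 1 ∧ (c + 1) % N = 0 := by
            refine divmod_unique hN ?_
            have e : N * (j + 1) = N * j + N := by ring
            omega
          have hj1k : j + 1 < k := by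
            have := div_lt_of_lt_mul' hc1
            rw [hdm.1] at this; exact this
          refine DEdgeE.vmatch i _ _ r _ _ ?_ ?_ ?_
          · rw [hdm.1, hdiv.1, mkFin_val hk hj1k, mkFin_val hk hjk]
          · rw [hdiv.2, mkFin_val hN hl]; omega
          · rw [hdm.2]; exact mkFin_val hN hN
        · -- up
          have hdm : (c + 1) / N = j ∧ (c + 1) % N = l + 1 :=
            divmod_unique (by omega) (by omega)
          have hfj : mkFin k hk ((c + 1) / N) = mkFin k hk (c / N) := by
            rw [hdm.1, hdiv.1]
          rw [hfj]
          refine DEdgeE.up i _ r _ _ ?_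
          rw [hdm.2, hdiv.2, mkFin_val hN (by omega), mkFin_val hN hl]

end DESound
namespace DESound

variable {k N : ℕ} (hk : 0 < k) (hN : 0 < N) (G : SimpleGraph (Fin N)) [DecidableRel G.Adj]

lemma rep_cases (m : ℕ) (hm : m < 3 * (k * N) + 2) :
    m = 0 ∨ m = 3 * (k * N) + 1 ∨ ∃ c t, t < 3 ∧ c < k * N ∧ m = 3 * c + t + 1 := by
  by_cases h0 : m = 0
  · exact Or.inl h0
  by_cases h1 : m = 3 * (k * N) + 1
  · exact Or.inr (Or.inl h1)
  exact Or.inr (Or.inr ⟨(m - 1) / 3, (m - 1) % 3, by omega, by omega, by omega⟩)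

lemma c_of_divmod {c1 c2 : ℕ} (hd : c1 / N = c2 / N) (hm : c1 % N = c2 % N) : c1 = c2 := by
  have h1 := Nat.div_add_mod c1 N
  have h2 := Nat.div_add_mod c2 N
  rw [hd, hm] at h1
  omega

lemma mkFin_inj {c1 c2 n : ℕ} (h : 0 < n) (h1 : c1 < n) (h2 : c2 < n)
    (he : mkFin n h c1 = mkFin n h c2) : c1 = c2 := by
  have := congrArg Fin.val he
  rwa [mkFin_val h h1, mkFin_val h h2] at this

lemma fV_inj (i : Fin k) (r : Fin N) (m1 m2 : ℕ) (h1 : m1 < 3 * (k * N) + 2)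
    (h2 : m2 < 3 * (k * N) + 2)
    (h : fV k N hk hN G i r m1 = fV k N hk hN G i r m2) : m1 = m2 := by
  have hb : fV k N hk hN G i r (3 * (k * N) + 1) = .b i := by simp [fV]
  have ha : fV k N hk hN G i r 0 = .a i := by simp [fV]
  rcases rep_cases m1 h1 with rfl | rfl | ⟨c1, t1, ht1, hc1, rfl⟩ <;>
    rcases rep_cases m2 h2 with rfl | rfl | ⟨c2, t2, ht2, hc2, rfl⟩
  · rfl
  · rw [ha, hb] at h; exact absurd h (by simp)
  · rw [ha, fV_eq hk hN G i r c2 t2 hc2 ht2] at h; exact absurd h (by simp)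
  · rw [ha, hb] at h; exact absurd h.symm (by simp)
  · rfl
  · rw [hb, fV_eq hk hN G i r c2 t2 hc2 ht2] at h; exact absurd h (by simp)
  · rw [ha, fV_eq hk hN G i r c1 t1 hc1 ht1] at h; exact absurd h.symm (by simp)
  · rw [hb, fV_eq hk hN G i r c1 t1 hc1 ht1] at h; exact absurd h.symm (by simp)
  · rw [fV_eq hk hN G i r c1 t1 hc1 ht1, fV_eq hk hN G i r c2 t2 hc2 ht2] at h
    simp only [DEdgeV.grid.injEq] at h
    obtain ⟨-, hj, -, hl, htag⟩ := h
    have hd1 : c1 / N < k := div_lt_of_lt_mul' hc1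
    have hd2 : c2 / N < k := div_lt_of_lt_mul' hc2
    have hdd : c1 / N = c2 / N := mkFin_inj hk hd1 hd2 hj
    have hmm : c1 % N = c2 % N :=
      mkFin_inj hN (Nat.mod_lt _ hN) (Nat.mod_lt _ hN) hl
    have hcc : c1 = c2 := c_of_divmod hdd hmm
    subst hcc
    have htt : t1 = t2 := by
      interval_cases t1 <;> interval_cases t2
      · rfl
      · exfalso; norm_num at htag; split_ifs at htag <;> simp at htag
      · exfalso; norm_num at htag; exact absurd htag (by decide)
      · exfalso; norm_num at htag; split_ifs at htag <;> simp at htag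
      · rfl
      · exfalso; norm_num at htag; split_ifs at htag <;> simp at htag
      · exfalso; norm_num at htag; exact absurd htag (by decide)
      · exfalso; norm_num at htag; split_ifs at htag <;> simp at htag
      · rfl
    omega

lemma pV_spec (hk : 0 < k) (hN : 0 < N) (i : Fin k) (r : Fin N) :
    ∃ p : List (DEdgeV k N),
      IsPathList (DEdgeE k N G) (.a i) (.b i) p ∧ p.length = 3 * (k * N) + 2 := by
  set n := 3 * (k * N) + 2 with hn
  have hn0 : 0 < n := by omega
  refine ⟨List.ofFn (fun m : Fin n => fV k N hk hN G i r m.val), ⟨?_, ?_, ?_, ?_⟩, by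
    simp [hn]⟩
  · simp only [List.Chain', List.isChain_iff_getElem]
    intro m hm
    simp only [List.get_ofFn, List.getElem_ofFn, List.length_ofFn] at hm ⊢
    exact fV_edge hk hN G i r m (by omega)
  · rw [List.nodup_ofFn]
    intro m1 m2 hmm
    exact Fin.ext (fV_inj hk hN G i r m1.val m2.val m1.isLt m2.isLt hmm)
  · have hne : List.ofFn (fun m : Fin n => fV k N hk hN G i r m.val) ≠ [] := by
      simp [← List.length_pos_iff, hn0]
    rw [List.head?_eq_head hne, List.head_eq_getElem, List.getElem_ofFn]
    simp [fV]
  · have hne : List.ofFn (fun m : Fin n => fV k N hk hN G i r m.val) ≠ [] := by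
      simp [← List.length_pos_iff, hn0]
    rw [List.getLast?_eq_getLast hne, List.getLast_eq_getElem, List.getElem_ofFn]
    have : (List.ofFn (fun m : Fin n => fV k N hk hN G i r m.val)).length - 1 =
        3 * (k * N) + 1 := by simp [hn]
    simp only [this]
    simp [fV]

end DESound
namespace DESound

variable {k N : ℕ} (hk : 0 < k) (hN : 0 < N) (G : SimpleGraph (Fin N)) [DecidableRel G.Adj]

/-- canonical horizontal path vertex function -/
def fH (k N : ℕ) (hk : 0 < k) (hN : 0 < N) (G : SimpleGraph (Fin N)) [DecidableRel G.Adj]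
    (j : Fin k) (s : Fin N) (m : ℕ) : DEdgeV k N :=
  if m = 0 then .c j
  else if m = 3 * (k * N) + 1 then .d j
  else .grid (mkFin k hk ((m - 1) / 3 / N)) j (mkFin N hN ((m - 1) / 3 % N)) s
    (if (m - 1) % 3 = 0 then .LB else if (m - 1) % 3 = 2 then .TR
     else if Split G (mkFin k hk ((m - 1) / 3 / N)) j (mkFin N hN ((m - 1) / 3 % N)) s
       then .Hor else .Mid)

variable {k N : ℕ} (hk : 0 < k) (hN : 0 < N) (G : SimpleGraph (Fin N)) [DecidableRel G.Adj]

lemma fH_eq (j : Fin k) (s : Fin N) (c t : ℕ) (hc : c < k * N) (ht : t < 3) :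
    fH k N hk hN G j s (3 * c + t + 1) =
      DEdgeV.grid (mkFin k hk (c / N)) j (mkFin N hN (c % N)) s
        (if t = 0 then .LB else if t = 2 then .TR
         else if Split G (mkFin k hk (c / N)) j (mkFin N hN (c % N)) s then .Hor else .Mid) := by
  have h1 : ¬(3 * c + t + 1 = 0) := by omega
  have h2 : ¬(3 * c + t + 1 = 3 * (k * N) + 1) := by omega
  have e1 : (3 * c + t + 1 - 1) / 3 = c := by omega
  have e2 : (3 * c + t + 1 - 1) % 3 = t := by omega
  simp only [fH, if_neg h1, if_neg h2, e1, e2]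

lemma fH_edge (j : Fin k) (s : Fin N) (m : ℕ) (hm : m + 1 < 3 * (k * N) + 2) :
    DEdgeE k N G (fH k N hk hN G j s m) (fH k N hk hN G j s (m + 1)) := by
  have hKN : 0 < k * N := Nat.mul_pos hk hN
  by_cases h0 : m = 0
  · -- srcA
    subst h0
    have : fH k N hk hN G j s 0 = .c j := by simp [fH]
    rw [this, show (0 + 1 : ℕ) = 3 * 0 + 0 + 1 from rfl, fH_eq hk hN G j s 0 0 hKN (by omega)]
    simp only [if_pos rfl]
    refine DEdgeE.srcC _ j _ s ?_ ?_
    · rw [Nat.zero_div]; exact mkFin_val hk hk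
    · rw [Nat.zero_mod]; exact mkFin_val hN hN
  · obtain ⟨c, t, ht, hc, rfl⟩ : ∃ c t, t < 3 ∧ c < k * N ∧ m = 3 * c + t + 1 := by
      refine ⟨(m - 1) / 3, (m - 1) % 3, by omega, by omega, by omega⟩
    -- facts about c
    obtain ⟨dj, l, hl, hcjl⟩ : ∃ dj l, l < N ∧ c = N * dj + l :=
      ⟨c / N, c % N, Nat.mod_lt _ hN, (Nat.div_add_mod c N).symm⟩
    have hdiv : c / N = dj ∧ c % N = l := divmod_unique hl hcjl
    have hjk : dj < k := by
      have := div_lt_of_lt_mul' hc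
      rw [hdiv.1] at this; exact this
    rw [fH_eq hk hN G j s c t hc ht]
    interval_cases t
    · -- LB -> mid
      rw [show 3 * c + 0 + 1 + 1 = 3 * c + 1 + 1 from rfl,
        fH_eq hk hN G j s c 1 hc (by omega)]
      norm_num
      by_cases hsp : Split G (mkFin k hk (c / N)) j (mkFin N hN (c % N)) s
      · rw [if_pos hsp]; exact DEdgeE.hor1 _ _ _ _ hsp
      · rw [if_neg hsp]; exact DEdgeE.mid1 _ _ _ _ hsp
    · -- mid -> TR
      rw [show 3 * c + 1 + 1 + 1 = 3 * c + 2 + 1 from rfl,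
        fH_eq hk hN G j s c 2 hc (by omega)]
      norm_num
      by_cases hsp : Split G (mkFin k hk (c / N)) j (mkFin N hN (c % N)) s
      · rw [if_pos hsp]; exact DEdgeE.hor2 _ _ _ _ hsp
      · rw [if_neg hsp]; exact DEdgeE.mid2 _ _ _ _ hsp
    · -- TR -> next LB or b
      norm_num
      by_cases hend : c + 1 = k * N
      · -- snkB
        have hb : fH k N hk hN G j s (3 * c + 2 + 1 + 1) = .d j := by
          have : 3 * c + 2 + 1 + 1 = 3 * (k * N) + 1 := by omega
          simp [fH, this]
        rw [hb]
        -- j = k - 1, l = N - 1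
        have hrepr : c = N * (k - 1) + (N - 1) := by
          have hexp : k * N = N * (k - 1) + N := by
            obtain ⟨k', rfl⟩ : ∃ k', k = k' + 1 := ⟨k - 1, by omega⟩
            simp only [Nat.add_sub_cancel]
            ring
          omega
        have hdm2 : c / N = k - 1 ∧ c % N = N - 1 :=
          divmod_unique (by omega) hrepr
        have hjl : dj = k - 1 ∧ l = N - 1 := by
          constructor
          · rw [← hdiv.1, hdm2.1]
          · rw [← hdiv.2, hdm2.2]
        refine DEdgeE.snkD (mkFin k hk (c / N)) j (mkFin N hN (c % N)) s ?_ ?_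
        · rw [hdiv.1, mkFin_val hk hjk, hjl.1]; omega
        · rw [hdiv.2, mkFin_val hN hl, hjl.2]; omega
      · -- up or vmatch
        have hc1 : c + 1 < k * N := by omega
        rw [show 3 * c + 2 + 1 + 1 = 3 * (c + 1) + 0 + 1 from by ring,
          fH_eq hk hN G j s (c + 1) 0 hc1 (by omega)]
        norm_num
        by_cases hwrap : l + 1 = N
        · -- vmatch
          have hdm : (c + 1) / N = dj + 1 ∧ (c + 1) % N = 0 := by
            refine divmod_unique hN ?_
            have e : N * (dj + 1) = N * dj + N := by ring
            omega
          have hj1k : dj + 1 < k := by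
            have := div_lt_of_lt_mul' hc1
            rw [hdm.1] at this; exact this
          refine DEdgeE.hmatch _ _ j _ _ s ?_ ?_ ?_
          · rw [hdm.1, hdiv.1, mkFin_val hk hj1k, mkFin_val hk hjk]
          · rw [hdiv.2, mkFin_val hN hl]; omega
          · rw [hdm.2]; exact mkFin_val hN hN
        · -- up
          have hdm : (c + 1) / N = dj ∧ (c + 1) % N = l + 1 :=
            divmod_unique (by omega) (by omega)
          have hfj : mkFin k hk ((c + 1) / N) = mkFin k hk (c / N) := by
            rw [hdm.1, hdiv.1]
          rw [hfj]
          refine DEdgeE.right _ j _ _ s ?_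
          rw [hdm.2, hdiv.2, mkFin_val hN (by omega), mkFin_val hN hl]


lemma fH_inj (j : Fin k) (s : Fin N) (m1 m2 : ℕ) (h1 : m1 < 3 * (k * N) + 2)
    (h2 : m2 < 3 * (k * N) + 2)
    (h : fH k N hk hN G j s m1 = fH k N hk hN G j s m2) : m1 = m2 := by
  have hb : fH k N hk hN G j s (3 * (k * N) + 1) = .d j := by simp [fH]
  have ha : fH k N hk hN G j s 0 = .c j := by simp [fH]
  rcases rep_cases m1 h1 with rfl | rfl | ⟨c1, t1, ht1, hc1, rfl⟩ <;>
    rcases rep_cases m2 h2 with rfl | rfl | ⟨c2, t2, ht2, hc2, rfl⟩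
  · rfl
  · rw [ha, hb] at h; exact absurd h (by simp)
  · rw [ha, fH_eq hk hN G j s c2 t2 hc2 ht2] at h; exact absurd h (by simp)
  · rw [ha, hb] at h; exact absurd h.symm (by simp)
  · rfl
  · rw [hb, fH_eq hk hN G j s c2 t2 hc2 ht2] at h; exact absurd h (by simp)
  · rw [ha, fH_eq hk hN G j s c1 t1 hc1 ht1] at h; exact absurd h.symm (by simp)
  · rw [hb, fH_eq hk hN G j s c1 t1 hc1 ht1] at h; exact absurd h.symm (by simp)
  · rw [fH_eq hk hN G j s c1 t1 hc1 ht1, fH_eq hk hN G j s c2 t2 hc2 ht2] at h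
    simp only [DEdgeV.grid.injEq] at h
    obtain ⟨hj, -, hl, -, htag⟩ := h
    have hd1 : c1 / N < k := div_lt_of_lt_mul' hc1
    have hd2 : c2 / N < k := div_lt_of_lt_mul' hc2
    have hdd : c1 / N = c2 / N := mkFin_inj hk hd1 hd2 hj
    have hmm : c1 % N = c2 % N :=
      mkFin_inj hN (Nat.mod_lt _ hN) (Nat.mod_lt _ hN) hl
    have hcc : c1 = c2 := c_of_divmod hdd hmm
    subst hcc
    have htt : t1 = t2 := by
      interval_cases t1 <;> interval_cases t2
      · rfl
      · exfalso; norm_num at htag; split_ifs at htag <;> simp at htag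
      · exfalso; norm_num at htag; exact absurd htag (by decide)
      · exfalso; norm_num at htag; split_ifs at htag <;> simp at htag
      · rfl
      · exfalso; norm_num at htag; split_ifs at htag <;> simp at htag
      · exfalso; norm_num at htag; exact absurd htag (by decide)
      · exfalso; norm_num at htag; split_ifs at htag <;> simp at htag
      · rfl
    omega

lemma pH_spec (hk : 0 < k) (hN : 0 < N) (j : Fin k) (s : Fin N) :
    ∃ p : List (DEdgeV k N),
      IsPathList (DEdgeE k N G) (.c j) (.d j) p ∧ p.length = 3 * (k * N) + 2 := by
  set n := 3 * (k * N) + 2 with hn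
  have hn0 : 0 < n := by omega
  refine ⟨List.ofFn (fun m : Fin n => fH k N hk hN G j s m.val), ⟨?_, ?_, ?_, ?_⟩, by
    simp [hn]⟩
  · simp only [List.Chain', List.isChain_iff_getElem]
    intro m hm
    simp only [List.get_ofFn, List.getElem_ofFn, List.length_ofFn] at hm ⊢
    exact fH_edge hk hN G j s m (by omega)
  · rw [List.nodup_ofFn]
    intro m1 m2 hmm
    exact Fin.ext (fH_inj hk hN G j s m1.val m2.val m1.isLt m2.isLt hmm)
  · have hne : List.ofFn (fun m : Fin n => fH k N hk hN G j s m.val) ≠ [] := by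
      simp [← List.length_pos_iff, hn0]
    rw [List.head?_eq_head hne, List.head_eq_getElem, List.getElem_ofFn]
    simp [fH]
  · have hne : List.ofFn (fun m : Fin n => fH k N hk hN G j s m.val) ≠ [] := by
      simp [← List.length_pos_iff, hn0]
    rw [List.getLast?_eq_getLast hne, List.getLast_eq_getElem, List.getElem_ofFn]
    have : (List.ofFn (fun m : Fin n => fH k N hk hN G j s m.val)).length - 1 =
        3 * (k * N) + 1 := by simp [hn]
    simp only [this]
    simp [fH]

end DESound
namespace DESound

variable {k N : ℕ}

lemma shortest_len_V (hN : 1 ≤ N) (hk : 1 ≤ k) {G : SimpleGraph (Fin N)}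
    [DecidableRel G.Adj] (i : Fin k) {p : List (DEdgeV k N)}
    (hp : IsShortestDirPath (DEdgeE k N G) (.a i) (.b i) p) :
    p.length = 3 * (k * N) + 2 := by
  obtain ⟨q, hq, hlq⟩ := pV_spec (G := G) hk hN i ⟨0, hN⟩
  have hle : p.length ≤ 3 * (k * N) + 2 := hlq ▸ hp.2 q hq
  have hne : p ≠ [] := by
    intro h; rw [h] at hp; exact absurd hp.1.head (by simp)
  have h0 : 0 < p.length := List.length_pos_iff.mpr hne
  have hhead : p[0] = DEdgeV.a i := by
    have := hp.1.head
    rw [List.head?_eq_head hne, List.head_eq_getElem] at this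
    exact Option.some_injective _ this
  have hlast : p[p.length - 1] = DEdgeV.b i := by
    have := hp.1.last
    rw [List.getLast?_eq_getLast hne, List.getLast_eq_getElem] at this
    exact Option.some_injective _ this
  have hup := chain'_g_upper (g := gV k N) hp.1.chain (fun x y h => gV_step h)
    (p.length - 1) (by omega) h0
  rw [hhead, hlast] at hup
  have hb : gV k N (DEdgeV.b i) = 3 * ((k : ℤ) * N) := rfl
  have ha : gV k N (DEdgeV.a i) = -1 := rfl
  rw [hb, ha] at hup
  have hkn : ((k : ℤ) * N) = ((k * N : ℕ) : ℤ) := by push_cast; ring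
  rw [hkn] at hup
  have hc : ((p.length - 1 : ℕ) : ℤ) = (p.length : ℤ) - 1 := by
    have : 1 ≤ p.length := h0
    push_cast [this]; ring
  omega

lemma shortest_len_H (hN : 1 ≤ N) (hk : 1 ≤ k) {G : SimpleGraph (Fin N)}
    [DecidableRel G.Adj] (j : Fin k) {p : List (DEdgeV k N)}
    (hp : IsShortestDirPath (DEdgeE k N G) (.c j) (.d j) p) :
    p.length = 3 * (k * N) + 2 := by
  obtain ⟨q, hq, hlq⟩ := pH_spec (G := G) hk hN j ⟨0, hN⟩
  have hle : p.length ≤ 3 * (k * N) + 2 := hlq ▸ hp.2 q hq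
  have hne : p ≠ [] := by
    intro h; rw [h] at hp; exact absurd hp.1.head (by simp)
  have h0 : 0 < p.length := List.length_pos_iff.mpr hne
  have hhead : p[0] = DEdgeV.c j := by
    have := hp.1.head
    rw [List.head?_eq_head hne, List.head_eq_getElem] at this
    exact Option.some_injective _ this
  have hlast : p[p.length - 1] = DEdgeV.d j := by
    have := hp.1.last
    rw [List.getLast?_eq_getLast hne, List.getLast_eq_getElem] at this
    exact Option.some_injective _ this
  have hup := chain'_g_upper (g := gH k N) hp.1.chain (fun x y h => gH_step h)
    (p.length - 1) (by omega) h0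
  rw [hhead, hlast] at hup
  have hb : gH k N (DEdgeV.d j) = 3 * ((k : ℤ) * N) := rfl
  have ha : gH k N (DEdgeV.c j) = -1 := rfl
  rw [hb, ha] at hup
  have hkn : ((k : ℤ) * N) = ((k * N : ℕ) : ℤ) := by push_cast; ring
  rw [hkn] at hup
  have hc : ((p.length - 1 : ℕ) : ℤ) = (p.length : ℤ) - 1 := by
    have : 1 ≤ p.length := h0
    push_cast [this]; ring
  omega

end DESound
/-- let `0 < ε ≤ 1/2`. If there is a collection `P` of pairwise
edge-disjoint directed paths in `D_edge` such that for at least `(1/2 + ε)·2k` of the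
`2k` terminal pairs `(s,t) ∈ T` the collection contains a shortest `s⇝t` path, then `G`
contains a clique of size at least `2εk`. -/
theorem DEdge_soundness (N k : ℕ) (hN : 1 ≤ N) (hk : 1 ≤ k)
    (G : SimpleGraph (Fin N)) [DecidableRel G.Adj]
    (ε : ℝ) (hε0 : 0 < ε) (hε : ε ≤ 1 / 2)
    (SAT : Finset (Fin k ⊕ Fin k)) (P : Fin k ⊕ Fin k → List (DEdgeV k N))
    (hcard : (1 / 2 + ε) * (2 * k) ≤ (SAT.card : ℝ))
    (hshort : ∀ x ∈ SAT, IsShortestDirPath (DEdgeE k N G) (eSrc x) (eDst x) (P x))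
    (hdisj : ∀ x ∈ SAT, ∀ y ∈ SAT, x ≠ y → EdgeDisj (P x) (P y)) :
    ∃ Z : Finset (Fin N),
      2 * ε * k ≤ (Z.card : ℝ) ∧ ∀ u ∈ Z, ∀ v ∈ Z, u ≠ v → G.Adj u v := by
  classical
  -- row of each satisfied vertical path
  have hV : ∀ i : Fin k, ∃ r : Fin N, Sum.inl i ∈ SAT →
      ∀ (j : Fin k) (ℓ : Fin N), ∃ t : ETag,
        DEdgeE k N G (.grid i j r ℓ .LB) (.grid i j r ℓ t) ∧
        ((DEdgeV.grid i j r ℓ .LB, DEdgeV.grid i j r ℓ t) ∈ dirEdges (P (Sum.inl i))) := by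
    intro i
    by_cases hi : Sum.inl i ∈ SAT
    · have hsp := hshort _ hi
      have hpl : IsPathList (DEdgeE k N G) (.a i) (.b i) (P (Sum.inl i)) := hsp.1
      have hlen : (P (Sum.inl i)).length = 3 * (k * N) + 2 := DESound.shortest_len_V hN hk i hsp
      obtain ⟨r, hr⟩ := DESound.vert_struct hN hk i hpl hlen
      exact ⟨r, fun _ => hr⟩
    · exact ⟨⟨0, hN⟩, fun h => absurd h hi⟩
  choose rfun hrfun using hV
  -- column of each satisfied horizontal path
  have hH : ∀ j : Fin k, ∃ s : Fin N, Sum.inr j ∈ SAT →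
      ∀ (i : Fin k) (q : Fin N), ∃ t : ETag,
        DEdgeE k N G (.grid i j q s .LB) (.grid i j q s t) ∧
        ((DEdgeV.grid i j q s .LB, DEdgeV.grid i j q s t) ∈ dirEdges (P (Sum.inr j))) := by
    intro j
    by_cases hj : Sum.inr j ∈ SAT
    · have hsp := hshort _ hj
      have hpl : IsPathList (DEdgeE k N G) (.c j) (.d j) (P (Sum.inr j)) := hsp.1
      have hlen : (P (Sum.inr j)).length = 3 * (k * N) + 2 := DESound.shortest_len_H hN hk j hsp
      obtain ⟨s, hs⟩ := DESound.horiz_struct hN hk j hpl hlen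
      exact ⟨s, fun _ => hs⟩
    · exact ⟨⟨0, hN⟩, fun h => absurd h hj⟩
  choose sfun hsfun using hH
  -- crossing lemma
  have hcross : ∀ i j : Fin k, Sum.inl i ∈ SAT → Sum.inr j ∈ SAT →
      Split G i j (rfun i) (sfun j) := by
    intro i j hi hj
    by_contra hns
    obtain ⟨t1, he1, hm1⟩ := hrfun i hi j (sfun j)
    obtain ⟨t2, he2, hm2⟩ := hsfun j hj i (rfun i)
    have ht1 : t1 = ETag.Mid := by
      cases he1 with
      | mid1 _ _ _ _ h => rfl
      | hor1 _ _ _ _ h => exact absurd h hns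
      | ver1 _ _ _ _ h => exact absurd h hns
    have ht2 : t2 = ETag.Mid := by
      cases he2 with
      | mid1 _ _ _ _ h => rfl
      | hor1 _ _ _ _ h => exact absurd h hns
      | ver1 _ _ _ _ h => exact absurd h hns
    rw [ht1] at hm1
    rw [ht2] at hm2
    exact hdisj _ hi _ hj (by simp) _ hm1 hm2
  -- diagonal: rfun = sfun on doubly satisfied indices
  have hdiag : ∀ i : Fin k, Sum.inl i ∈ SAT → Sum.inr i ∈ SAT → rfun i = sfun i := by
    intro i hi hj
    rcases hcross i i hi hj with ⟨-, h⟩ | ⟨h, -⟩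
    · exact h
    · exact absurd rfl h
  -- adjacency between distinct doubly satisfied indices
  have hadj : ∀ i j : Fin k, i ≠ j → Sum.inl i ∈ SAT → Sum.inr i ∈ SAT →
      Sum.inl j ∈ SAT → Sum.inr j ∈ SAT → G.Adj (rfun i) (rfun j) := by
    intro i j hij hi1 hi2 hj1 hj2
    rcases hcross i j hi1 hj2 with ⟨h, -⟩ | ⟨-, h⟩
    · exact absurd h hij
    · rw [← hdiag j hj1 hj2] at h
      exact h
  -- counting
  set A : Finset (Fin k) := Finset.univ.filter (fun i => Sum.inl i ∈ SAT) with hA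
  set C : Finset (Fin k) := Finset.univ.filter (fun i => Sum.inr i ∈ SAT) with hC
  have hsub : SAT ⊆ A.image Sum.inl ∪ C.image Sum.inr := by
    intro x hx
    rcases x with i | j
    · exact Finset.mem_union_left _ (Finset.mem_image_of_mem _ (by simp [hA, hx]))
    · exact Finset.mem_union_right _ (Finset.mem_image_of_mem _ (by simp [hC, hx]))
  have hcard2 : SAT.card ≤ A.card + C.card := by
    calc SAT.card ≤ (A.image Sum.inl ∪ C.image Sum.inr).card := Finset.card_le_card hsub
    _ ≤ (A.image Sum.inl).card + (C.image Sum.inr).card := Finset.card_union_le _ _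
    _ ≤ A.card + C.card := by
        gcongr <;> exact Finset.card_image_le
  have hunion : (A ∪ C).card ≤ k := by
    calc (A ∪ C).card ≤ (Finset.univ : Finset (Fin k)).card := Finset.card_le_univ _
    _ = k := by simp
  have hIcard : SAT.card ≤ (A ∩ C).card + k := by
    have := Finset.card_inter_add_card_union A C
    omega
  -- the clique
  refine ⟨(A ∩ C).image rfun, ?_, ?_⟩
  · have hinj : Set.InjOn rfun ↑(A ∩ C) := by
      intro i hi j hj hrr
      by_contra hij
      have hi' : Sum.inl i ∈ SAT ∧ Sum.inr i ∈ SAT := by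
        simp only [Finset.coe_inter, Set.mem_inter_iff, Finset.mem_coe, hA, hC,
          Finset.mem_filter] at hi
        exact ⟨hi.1.2, hi.2.2⟩
      have hj' : Sum.inl j ∈ SAT ∧ Sum.inr j ∈ SAT := by
        simp only [Finset.coe_inter, Set.mem_inter_iff, Finset.mem_coe, hA, hC,
          Finset.mem_filter] at hj
        exact ⟨hj.1.2, hj.2.2⟩
      have := hadj i j hij hi'.1 hi'.2 hj'.1 hj'.2
      rw [hrr] at this
      exact G.irrefl this
    rw [Finset.card_image_of_injOn hinj]
    have h1 : ((A ∩ C).card : ℝ) + k ≥ (SAT.card : ℝ) := by exact_mod_cast hIcard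
    have h2 : (1 / 2 + ε) * (2 * k) = (k : ℝ) + 2 * ε * k := by ring
    rw [h2] at hcard
    linarith
  · intro u hu v hv huv
    obtain ⟨i, hi, rfl⟩ := Finset.mem_image.mp hu
    obtain ⟨j, hj, rfl⟩ := Finset.mem_image.mp hv
    have hij : i ≠ j := by rintro rfl; exact huv rfl
    simp only [hA, hC, Finset.mem_inter, Finset.mem_filter] at hi hj
    exact hadj i j hij hi.1.2 hi.2.2 hj.1.2 hj.2.2
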